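/- If a connected graph G has a stable cut, then G has a NAC-coloring. -/

import Mathlib

open SimpleGraph

def IsNACColoring {V : Type*} (G : SimpleGraph V) (δ : Sym2 V → Bool) : Prop :=
  (∃ e ∈ G.edgeSet, δ e = true) ∧ (∃ e ∈ G.edgeSet, δ e = false) ∧
  ∀ ⦃u : V⦄ (w : G.Walk u u), w.IsCycle →
    ∀ b : Bool, (w.edges.countP fun e => δ e == b) ≠ 1

section Aux

variable {V : Type*} {G : SimpleGraph V}

private lemma list_head_last_ne {α : Type*} {l t t' : List α} {e : α}
    (h : l = e :: t) (h2 : l.reverse = e :: t') (hnd : l.Nodup) (hlen : 2 ≤ l.length) :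
    False := by
  subst h
  have ht : t ≠ [] := by
    rintro rfl; simp at hlen
  obtain ⟨a, r, har⟩ := List.exists_cons_of_ne_nil (by simpa using ht : t.reverse ≠ [])
  rw [List.reverse_cons, har, List.cons_append] at h2
  have ha : a = e := (List.cons.injEq _ _ _ _ ▸ h2).1
  have : e ∈ t := by
    have : a ∈ t.reverse := har ▸ (List.mem_cons_self (a := a) (l := r))
    rwa [ha, List.mem_reverse] at this
  exact (List.nodup_cons.mp hnd).1 this

private lemma exists_head_edge {a c : V} (hac : a ≠ c) (p : G.Walk a c) :
    ∃ d, G.Adj a d ∧ s(a, d) ∈ p.edges := by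
  cases p with
  | nil => exact absurd rfl hac
  | cons h q => exact ⟨_, h, by simp⟩

private lemma edges_cons_of_ne_nil {a c : V} (p : G.Walk a c) (h : p.edges ≠ []) :
    ∃ d t, p.edges = s(a, d) :: t := by
  cases p with
  | nil => simp at h
  | cons h q => exact ⟨_, q.edges, Walk.edges_cons _ _⟩

private lemma cycle_start_two {x : V} {w : G.Walk x x} (hw : w.IsCycle) :
    ∃ e₁ e₂, e₁ ∈ w.edges ∧ e₂ ∈ w.edges ∧ e₁ ≠ e₂ ∧ x ∈ e₁ ∧ x ∈ e₂ := by
  have hlen : 3 ≤ w.length := hw.three_le_length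
  have hlen' : 2 ≤ w.edges.length := by rw [w.length_edges]; omega
  have hne : w.edges ≠ [] := by
    intro h; rw [h] at hlen'; simp at hlen'
  obtain ⟨d, t, hdt⟩ := edges_cons_of_ne_nil w hne
  have hner : w.reverse.edges ≠ [] := by
    rw [Walk.edges_reverse]; simpa using hne
  obtain ⟨d', t', hdt'⟩ := edges_cons_of_ne_nil w.reverse hner
  rw [Walk.edges_reverse] at hdt'
  refine ⟨s(x, d), s(x, d'), by rw [hdt]; exact List.mem_cons_self,
    by rw [← List.mem_reverse, hdt']; exact List.mem_cons_self, ?_,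
    Sym2.mem_mk_left _ _, Sym2.mem_mk_left _ _⟩
  intro heq
  rw [← heq] at hdt'
  exact list_head_last_ne hdt hdt' hw.edges_nodup hlen'

private lemma cycle_two_incident [DecidableEq V] {u : V} {w : G.Walk u u} (hw : w.IsCycle)
    {a : V} (ha : a ∈ w.support) :
    ∃ e₁ e₂, e₁ ∈ w.edges ∧ e₂ ∈ w.edges ∧ e₁ ≠ e₂ ∧ a ∈ e₁ ∧ a ∈ e₂ := by
  obtain ⟨e₁, e₂, h1, h2, hne, m1, m2⟩ := cycle_start_two (hw.rotate ha)
  have hperm := (w.rotate_edges a ha).perm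
  exact ⟨e₁, e₂, hperm.mem_iff.mp h1, hperm.mem_iff.mp h2, hne, m1, m2⟩

private lemma two_le_countP {α : Type*} {l : List α} (pr : α → Bool) {e₁ e₂ : α}
    (h1 : e₁ ∈ l) (h2 : e₂ ∈ l) (hne : e₁ ≠ e₂) (hp1 : pr e₁ = true) (hp2 : pr e₂ = true) :
    2 ≤ l.countP pr := by
  have hsub : List.Subperm [e₁, e₂] (l.filter pr) := by
    refine List.subperm_of_subset (by simp [hne]) ?_
    intro x hx
    rcases List.mem_pair.mp hx with rfl | rfl <;> rw [List.mem_filter] <;>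
      exact ⟨‹_›, ‹_›⟩
  simpa [List.countP_eq_length_filter] using hsub.length_le

end Aux

/-- a connected graph with a stable cut has a NAC-coloring.
`S` is a stable (independent) set and removing it disconnects the graph. -/
theorem stableCut_hasNAC {V : Type*} (G : SimpleGraph V) (hG : G.Connected)
    (S : Set V)
    (hstable : ∀ u ∈ S, ∀ v ∈ S, ¬ G.Adj u v)
    (hcut : ∃ u v : ↥(Sᶜ), ¬ (G.induce Sᶜ).Reachable u v) :
    ∃ δ : Sym2 V → Bool, IsNACColoring G δ := by
  classical
  obtain ⟨u₀, v₀, hnr⟩ := hcut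
  set A : Set V := {x | ∃ h : x ∈ Sᶜ, (G.induce Sᶜ).Reachable u₀ ⟨x, h⟩} with hA
  have huA : (u₀ : V) ∈ A := ⟨u₀.2, Reachable.refl _⟩
  have hvA : (v₀ : V) ∉ A := by
    rintro ⟨h, hr⟩
    exact hnr hr
  have hclosed : ∀ ⦃p q : V⦄, p ∈ A → G.Adj p q → q ∈ A ∨ q ∈ S := by
    intro p q hp hadj
    by_cases hq : q ∈ S
    · exact Or.inr hq
    · left
      obtain ⟨hpS, hr⟩ := hp
      refine ⟨hq, hr.trans (SimpleGraph.Adj.reachable ?_)⟩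
      exact hadj
  set δ : Sym2 V → Bool := fun e => decide (∃ x ∈ e, x ∈ A) with hδ
  have huv : (u₀ : V) ≠ (v₀ : V) := fun h => hvA (h ▸ huA)
  obtain ⟨p⟩ := hG.preconnected (u₀ : V) (v₀ : V)
  -- red edge
  obtain ⟨d, hadjd, hmemd⟩ := exists_head_edge huv p
  have hred : δ s((u₀ : V), d) = true := by
    simp only [hδ, decide_eq_true_iff]
    exact ⟨(u₀ : V), Sym2.mem_mk_left _ _, huA⟩
  -- blue edge
  obtain ⟨z, hadjz, hmemz⟩ := exists_head_edge huv.symm p.reverse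
  have hblue : δ s((v₀ : V), z) = false := by
    simp only [hδ, decide_eq_false_iff_not]
    rintro ⟨x, hx, hxA⟩
    rcases Sym2.mem_iff.mp hx with rfl | rfl
    · exact hvA hxA
    · rcases hclosed hxA hadjz.symm with h | h
      · exact hvA h
      · exact v₀.2 h
  refine ⟨δ, ⟨_, G.mem_edgeSet.mpr hadjd, hred⟩, ⟨_, G.mem_edgeSet.mpr hadjz, hblue⟩, ?_⟩
  intro u w hw b hcount
  -- the unique edge of colour b
  obtain ⟨e₀, he₀w, he₀b⟩ : ∃ e ∈ w.edges, δ e = b := by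
    by_contra h
    push_neg at h
    rw [List.countP_eq_zero.mpr (fun e he => by simp [h e he])] at hcount
    exact absurd hcount.symm one_ne_zero
  -- red edge incident to a vertex outside A forces it into S
  have redS : ∀ e ∈ w.edges, ∀ x, x ∈ e → x ∉ A → δ e = true → x ∈ S := by
    intro e he x hx hxA hredE
    obtain ⟨y, rfl⟩ := Sym2.mem_iff_exists.mp hx
    obtain ⟨m, hm, hmA⟩ : ∃ m ∈ s(x, y), m ∈ A := by
      simpa only [hδ, decide_eq_true_iff] using hredE
    rcases Sym2.mem_iff.mp hm with rfl | rfl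
    · exact absurd hmA hxA
    · have hadj : G.Adj x m := G.mem_edgeSet.mp (w.edges_subset_edgeSet he)
      rcases hclosed hmA hadj.symm with h | h
      · exact absurd h hxA
      · exact h
  cases b with
  | true =>
    -- e₀ is red; an endpoint in A gives two red incident edges
    obtain ⟨m, hm, hmA⟩ : ∃ m ∈ e₀, m ∈ A := by
      simpa only [hδ, decide_eq_true_iff] using he₀b
    obtain ⟨y, rfl⟩ := Sym2.mem_iff_exists.mp hm
    have hmsup : m ∈ w.support := w.fst_mem_support_of_mem_edges he₀w
    obtain ⟨e₁, e₂, h1, h2, hne, m1, m2⟩ := cycle_two_incident hw hmsup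
    have hp1 : (δ e₁ == true) = true := by
      rw [beq_iff_eq]; simp only [hδ, decide_eq_true_iff]; exact ⟨m, m1, hmA⟩
    have hp2 : (δ e₂ == true) = true := by
      rw [beq_iff_eq]; simp only [hδ, decide_eq_true_iff]; exact ⟨m, m2, hmA⟩
    have := two_le_countP (fun e => δ e == true) h1 h2 hne hp1 hp2
    omega
  | false =>
    -- both endpoints of e₀ avoid A, hence lie in S, contradicting stability
    have he₀A : ∀ x ∈ e₀, x ∉ A := by
      intro x hx hxA
      have : δ e₀ = true := by
        simp only [hδ, decide_eq_true_iff]; exact ⟨x, hx, hxA⟩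
      rw [he₀b] at this
      exact Bool.false_ne_true this
    have keyS : ∀ x ∈ e₀, x ∈ S := by
      intro x hx
      obtain ⟨y, hy⟩ := Sym2.mem_iff_exists.mp hx
      have hxsup : x ∈ w.support := w.fst_mem_support_of_mem_edges (hy ▸ he₀w)
      obtain ⟨e₁, e₂, h1, h2, hne, m1, m2⟩ := cycle_two_incident hw hxsup
      by_cases hr1 : δ e₁ = true
      · exact redS e₁ h1 x m1 (he₀A x hx) hr1
      · by_cases hr2 : δ e₂ = true
        · exact redS e₂ h2 x m2 (he₀A x hx) hr2
        · have hp1 : (δ e₁ == false) = true := by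
            rw [beq_iff_eq]; exact Bool.eq_false_iff.mpr hr1
          have hp2 : (δ e₂ == false) = true := by
            rw [beq_iff_eq]; exact Bool.eq_false_iff.mpr hr2
          have := two_le_countP (fun e => δ e == false) h1 h2 hne hp1 hp2
          omega
    obtain ⟨a, c, rfl⟩ : ∃ a c, e₀ = s(a, c) := by
      induction e₀ using Sym2.ind with
      | _ a c => exact ⟨a, c, rfl⟩
    have hadj : G.Adj a c := G.mem_edgeSet.mp (w.edges_subset_edgeSet he₀w)
    exact hstable a (keyS a (Sym2.mem_mk_left _ _)) c (keyS c (Sym2.mem_mk_right _ _)) hadj
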